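/- arXiv:2101.10400 — 3 statements merged into one kernel-verified Lean document; each statement's English description precedes it below -/
import Mathlib

section
/- Let p be a prime, R a commutative ring of characteristic p, and m, N natural numbers. Then for every polynomial f ∈ R[X], the (N + p^m)-th Hasse derivative satisfies D^{(N+p^m)}(X^{p^m}·f) = X^{p^m}·D^{(N+p^m)}(f) + D^{(N)}(f). Equivalently, as R-linear endomorphisms of R[X], the commutator of multiplication by X^{p^m} with D^{(N+p^m)} equals −D^{(N)}: X^{p^m}·D^{(N+p^m)}(f) − D^{(N+p^m)}(X^{p^m}·f) = −D^{(N)}(f). -/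
open Polynomial

lemma choose_key (p : ℕ) (hp : p.Prime) (R : Type*) [CommRing R] [CharP R p] (m n N : ℕ) :
    ((n + p ^ m).choose (N + p ^ m) : R) = (n.choose (N + p ^ m) : R) + n.choose N := by
  haveI := hp.one_lt
  haveI : Fact p.Prime := ⟨hp⟩
  have h1 : ((1 + X : R[X])) ^ (n + p ^ m) = (1 + X) ^ n * 1 + (1 + X) ^ n * X ^ p ^ m := by
    rw [pow_add, add_pow_char_pow, one_pow, mul_add]
  have h2 := congrArg (fun q : R[X] => q.coeff (N + p ^ m)) h1
  simpa [coeff_one_add_X_pow, coeff_mul_X_pow] using h2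

/-- In characteristic `p`, the Hasse derivatives satisfy
`D^{(N+p^m)}(X^{p^m}·f) = X^{p^m}·D^{(N+p^m)}(f) + D^{(N)}(f)`, i.e. the commutator of
multiplication by `X^{p^m}` with `D^{(N+p^m)}` equals `−D^{(N)}`. -/
theorem hasseDeriv_pow_p_mul (p : ℕ) (hp : p.Prime) (R : Type*) [CommRing R] [CharP R p]
    (m N : ℕ) (f : R[X]) :
    hasseDeriv (N + p ^ m) (X ^ p ^ m * f) =
      X ^ p ^ m * hasseDeriv (N + p ^ m) f + hasseDeriv N f := by
  induction f using Polynomial.induction_on' with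
  | add f g hf hg =>
    simp only [mul_add, map_add, hf, hg]; ring
  | monomial n r =>
    have hX : (X : R[X]) ^ p ^ m = monomial (p ^ m) 1 := by
      rw [← monomial_one_one_eq_X, monomial_pow, one_pow, one_mul]
    rw [hX, monomial_mul_monomial, one_mul, hasseDeriv_monomial, hasseDeriv_monomial,
      hasseDeriv_monomial, monomial_mul_monomial, one_mul]
    have hsub : p ^ m + n - (N + p ^ m) = n - N := by omega
    rw [hsub, Nat.add_comm (p ^ m) n, choose_key p hp R m n N, add_mul]
    by_cases h : N + p ^ m ≤ n
    · have : p ^ m + (n - (N + p ^ m)) = n - N := by omega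
      rw [this, map_add]
    · rw [Nat.choose_eq_zero_of_lt (by omega), Nat.cast_zero, zero_mul, zero_add,
        monomial_zero_right, zero_add]
end

section
/- Let p be a prime, R a commutative ring of characteristic p, and m a natural number. Let a : ℕ → R[X] be a finitely supported function and let U be the R-linear endomorphism of R[X] given by U(f) = Σ_ν a_ν · D^{(ν)}(f). Then there exists a finitely supported function b : ℕ → R[X] (namely b_{ν+p^m} = −a_ν and b_μ = 0 for μ < p^m) such that the endomorphism Q(f) = Σ_ν b_ν · D^{(ν)}(f) satisfies the commutator identity X^{p^m}·Q(f) − Q(X^{p^m}·f) = U(f) for all f ∈ R[X]; moreover, if a_ν = 0 for all ν > n, then b_ν = 0 for all ν > n + p^m. -/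
open Polynomial

lemma hasseDeriv_X_pow_prime_pow_mul {p : ℕ} (hp : p.Prime) {R : Type*} [CommRing R]
    [CharP R p] (m ν : ℕ) (f : R[X]) :
    hasseDeriv (ν + p ^ m) (X ^ p ^ m * f) =
      X ^ p ^ m * hasseDeriv (ν + p ^ m) f + hasseDeriv ν f := by
  set q := p ^ m with hq
  have hq0 : q ≠ 0 := pow_ne_zero _ hp.pos.ne'
  rw [hasseDeriv_mul]
  have hpair : ({(0, ν + q), (q, ν)} : Finset (ℕ × ℕ)) ⊆ Finset.HasAntidiagonal.antidiagonal (ν + q) := by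
    intro ij hij
    simp only [Finset.mem_insert, Finset.mem_singleton] at hij
    rcases hij with h | h <;> subst h <;> simp [Finset.HasAntidiagonal.mem_antidiagonal, Nat.add_comm]
  have hzero : ∀ ij ∈ Finset.HasAntidiagonal.antidiagonal (ν + q),
      ij ∉ ({(0, ν + q), (q, ν)} : Finset (ℕ × ℕ)) →
      hasseDeriv ij.1 (X ^ q) * hasseDeriv ij.2 f = 0 := by
    rintro ⟨i, j⟩ hij hne
    simp only [Finset.HasAntidiagonal.mem_antidiagonal] at hij
    simp only [Finset.mem_insert, Finset.mem_singleton, Prod.mk.injEq, not_or, not_and] at hne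
    have hi0 : i ≠ 0 := by
      intro h; subst h; exact hne.1 rfl (by omega)
    have hiq : i ≠ q := by
      intro h; subst h; exact hne.2 rfl (by omega)
    have hdvd : p ∣ q.choose i := hp.dvd_choose_pow hi0 hiq
    have hcast : ((q.choose i : ℕ) : R) = 0 := (CharP.cast_eq_zero_iff R p _).mpr hdvd
    have : hasseDeriv i (X ^ q : R[X]) = 0 := by
      rw [X_pow_eq_monomial, hasseDeriv_monomial, hcast, zero_mul, monomial_zero_right]
    rw [this, zero_mul]
  rw [← Finset.sum_subset hpair hzero]
  rw [Finset.sum_pair (by simp [hq0, Ne, Prod.ext_iff])]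
  have h0 : hasseDeriv 0 (X ^ q : R[X]) = X ^ q := by simp
  have hqq : hasseDeriv q (X ^ q : R[X]) = 1 := by
    rw [X_pow_eq_monomial, hasseDeriv_monomial]
    simp
  simp only [h0, hqq, one_mul]

/-- One-variable mod-`p` version of Berthelot's commutator lemma: for a differential
operator `U = Σ_ν a_ν·D^{(ν)}` (with `a` finitely supported, `D^{(ν)}` the Hasse
derivatives) on `R[X]`, `R` of characteristic `p`, there is an operator
`Q = Σ_ν b_ν·D^{(ν)}` with `X^{p^m}·Q(f) − Q(X^{p^m}·f) = U(f)` for all `f`; moreover if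
`a_ν = 0` for all `ν > n` then `b_ν = 0` for all `ν > n + p^m`. -/
theorem exists_commutator_eq (p : ℕ) (hp : p.Prime) (R : Type*) [CommRing R] [CharP R p]
    (m : ℕ) (a : ℕ →₀ R[X]) :
    ∃ b : ℕ →₀ R[X],
      (∀ f : R[X],
        X ^ p ^ m * (b.sum fun ν c => c * hasseDeriv ν f) -
            (b.sum fun ν c => c * hasseDeriv ν (X ^ p ^ m * f)) =
          a.sum fun ν c => c * hasseDeriv ν f) ∧
      (∀ n : ℕ, (∀ ν > n, a ν = 0) → ∀ ν > n + p ^ m, b ν = 0) := by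
  set q := p ^ m with hq
  set emb : ℕ ↪ ℕ := ⟨fun ν => ν + q, add_left_injective q⟩ with hemb
  refine ⟨(a.mapRange (fun c => -c) neg_zero).embDomain emb, ?_, ?_⟩
  · intro f
    rw [Finsupp.sum_embDomain, Finsupp.sum_embDomain,
      Finsupp.sum_mapRange_index (by simp), Finsupp.sum_mapRange_index (by simp)]
    simp only [hemb, Function.Embedding.coeFn_mk]
    rw [Finsupp.sum, Finsupp.sum, Finsupp.sum, Finset.mul_sum, ← Finset.sum_sub_distrib]
    refine Finset.sum_congr rfl fun ν _ => ?_
    rw [hasseDeriv_X_pow_prime_pow_mul hp]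
    ring
  · intro n hn ν hν
    have hle : q ≤ ν := by omega
    have : ν = emb (ν - q) := by simp [hemb]; omega
    rw [this, Finsupp.embDomain_apply_self, Finsupp.mapRange_apply, hn _ (by omega), neg_zero]
end

section
/- Let R be an associative unital ℚ-algebra containing elements t and ∂ satisfying ∂·t − t·∂ = 1, and let M be a left R-module. Set M₀ := {m ∈ M : t·m = 0}. If u ∈ M satisfies tʲ·u = 0 for some integer j ≥ 1, then u belongs to the R-submodule of M generated by M₀. -/
lemma comm_pow_aux (R : Type*) [Ring R] (t d : R) (h : d * t - t * d = 1) :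
    ∀ n : ℕ, d * t ^ (n + 1) = t ^ (n + 1) * d + ((n : R) + 1) * t ^ n := by
  have hdt : d * t = t * d + 1 := sub_eq_iff_eq_add'.mp h
  intro n
  induction n with
  | zero => simpa using hdt
  | succ k ih =>
    rw [pow_succ, ← mul_assoc, ih, add_mul, mul_assoc, hdt]
    push_cast
    noncomm_ring

/-- Let `R` be an associative unital `ℚ`-algebra with elements `t, ∂` satisfying
`∂·t − t·∂ = 1`, and let `M` be a left `R`-module. If `u ∈ M` is killed by `tʲ` for some
`j ≥ 1`, then `u` lies in the `R`-submodule generated by `M₀ = {m ∈ M : t·m = 0}`. -/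
theorem mem_span_ker_of_pow_smul_eq_zero
    (R : Type*) [Ring R] [Algebra ℚ R] (t d : R) (h : d * t - t * d = 1)
    (M : Type*) [AddCommGroup M] [Module R M]
    (u : M) (j : ℕ) (hj : 1 ≤ j) (hu : t ^ j • u = 0) :
    u ∈ Submodule.span R {m : M | t • m = 0} := by
  induction j generalizing u with
  | zero => omega
  | succ k ih =>
    rcases Nat.eq_zero_or_pos k with hk | hk
    · subst hk
      apply Submodule.subset_span
      simpa using hu
    · -- t • u is killed by t^k
      have h1 : t ^ k • (t • u) = 0 := by
        rw [← mul_smul, ← pow_succ]; exact hu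
      have htu : t • u ∈ Submodule.span R {m : M | t • m = 0} := ih _ hk h1
      -- apply d to hu
      have h2 : (d * t ^ (k + 1)) • u = 0 := by
        rw [mul_smul, hu, smul_zero]
      rw [comm_pow_aux R t d h k] at h2
      have h3 : t ^ k • ((t * d + ((k : R) + 1)) • u) = 0 := by
        have : (t ^ (k + 1) * d + ((k : R) + 1) * t ^ k) • u
            = t ^ k • ((t * d + ((k : R) + 1)) • u) := by
          rw [← mul_smul]
          congr 1
          rw [pow_succ]
          noncomm_ring
          rw [(Nat.cast_commute k (t ^ k)).eq]
          abel
        rw [← this]; exact h2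
      have hw : (t * d + ((k : R) + 1)) • u ∈ Submodule.span R {m : M | t • m = 0} :=
        ih _ hk h3
      have hdtu : (d * t) • u ∈ Submodule.span R {m : M | t • m = 0} := by
        rw [mul_smul]
        exact Submodule.smul_mem _ d htu
      have hku : (k : R) • u ∈ Submodule.span R {m : M | t • m = 0} := by
        have : (k : R) • u = (t * d + ((k : R) + 1)) • u - (d * t) • u := by
          rw [← sub_smul]
          congr 1
          have hdt : d * t = t * d + 1 := sub_eq_iff_eq_add'.mp h
          rw [hdt]
          noncomm_ring
        rw [this]
        exact Submodule.sub_mem _ hw hdtu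
      have hkq : ((k : ℚ) ≠ 0) := by exact_mod_cast hk.ne'
      have : u = (algebraMap ℚ R (k : ℚ)⁻¹) • ((k : R) • u) := by
        rw [← mul_smul]
        have : algebraMap ℚ R (k : ℚ)⁻¹ * (k : R) = 1 := by
          rw [show ((k : R)) = algebraMap ℚ R (k : ℚ) by simp, ← map_mul,
            inv_mul_cancel₀ hkq, map_one]
        rw [this, one_smul]
      rw [this]
      exact Submodule.smul_mem _ _ hku
end
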